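/- In a free group F, if x₁, x₂ are distinct elements, y₁, y₂ are distinct elements, and there exist α, β, γ, α', β' ∈ F and elements x₁', x₂', y₁', y₂' ∈ F such that xᵢ * α * yⱼ * β = γ * yⱼ' * α' * xᵢ' * β' for all i ∈ {1,2} and j ∈ {1,2}, then there exists a primitive element p ∈ F and integers r, s with x₁ * α = x₂ * α * p^r and y₁ = p^s * y₂. -/

import Mathlib

open scoped Pointwise

/-- An element `p` of a free group is primitive if it is nontrivial and its only
roots are `p` itself and `p⁻¹`. -/
def IsPrimitiveElt {A : Type*} (p : FreeGroup A) : Prop :=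
  p ≠ 1 ∧ ∀ (w : FreeGroup A) (l : ℤ), w ^ l = p → w = p ∨ w = p⁻¹

/-- The coset `v·⟨p⟩ = {v * p^k : k ∈ ℤ}`. -/
def coset {A : Type*} (v p : FreeGroup A) : Set (FreeGroup A) :=
  {x | ∃ k : ℤ, x = v * p ^ k}

/-- A free group element is cyclically reduced if its reduced word does not begin
and end with mutually inverse letters. -/
def CyclicallyReduced {A : Type*} [DecidableEq A] (w : FreeGroup A) : Prop :=
  ∀ x y : A × Bool, w.toWord.head? = some x → w.toWord.getLast? = some y →
    ¬(x.1 = y.1 ∧ x.2 = !y.2)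

set_option linter.unusedSectionVars false

namespace FGAux
open FreeGroup List

variable {A : Type*} [DecidableEq A]

/-- no-cancellation relation between adjacent letters -/
def R : (A × Bool) → (A × Bool) → Prop := fun a b => ¬(a.1 = b.1 ∧ a.2 = !b.2)

theorem reduce_eq_self_iff (L : List (A × Bool)) :
    reduce L = L ↔ List.Chain' R L := by
  induction L with
  | nil => simp; exact List.isChain_nil
  | cons x L ih =>
    rw [reduce.cons]
    rcases hL : reduce L with _ | ⟨hd, tl⟩ <;> dsimp only
    · constructor
      · intro h
        have hL0 : L = [] := by
          have hlen := (FreeGroup.reduce.red (L := L)).length_le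
          cases L with
          | nil => rfl
          | cons a L' =>
            exfalso
            have : ([x] : List (A × Bool)).length = (x :: a :: L').length := by rw [h]
            simp at this
        subst hL0; exact List.isChain_singleton _
      · intro h
        have : L = [] := by
          cases L with
          | nil => rfl
          | cons a L' =>
            have := (ih.2 h.tail).symm.trans hL
            simp at this
        subst this; rfl
    · by_cases hc : x.1 = hd.1 ∧ x.2 = !hd.2
      · rw [if_pos hc]
        constructor
        · intro h
          exfalso
          have hlen := (FreeGroup.reduce.red (L := L)).length_le
          rw [hL] at hlen
          have : tl.length = (x :: L).length := by rw [h]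
          simp at this hlen
          omega
        · intro h
          exfalso
          have hLL : reduce L = L := ih.2 h.tail
          rw [hL] at hLL
          have hx : R x hd := by
            rw [← hLL] at h
            exact (List.isChain_cons_cons.1 h).1
          exact hx hc
      · rw [if_neg hc]
        constructor
        · intro h
          have hxL : x :: L = x :: hd :: tl := h.symm
          have hLL : L = hd :: tl := by injection hxL
          rw [← hL] at hLL
          have := ih.1 hLL.symm
          apply List.isChain_cons.2
          refine ⟨?_, this⟩
          intro y hy
          rw [hLL, hL] at hy
          simp at hy
          subst hy
          exact hc
        · intro h
          have hLL : reduce L = L := ih.2 h.tail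
          rw [hL] at hLL
          rw [hLL]

theorem chain'_toWord (x : FreeGroup A) : List.Chain' R x.toWord :=
  (reduce_eq_self_iff _).1 (reduce_toWord x)

theorem toWord_mk_of_chain' {L : List (A × Bool)} (h : List.Chain' R L) :
    (mk L).toWord = L := by rw [toWord_mk, (reduce_eq_self_iff L).2 h]

theorem toWord_mul_of_chain' (x y : FreeGroup A) (h : Chain' R (x.toWord ++ y.toWord)) :
    (x * y).toWord = x.toWord ++ y.toWord := by
  conv_lhs => rw [← mk_toWord (x := x), ← mk_toWord (x := y)]
  rw [mul_mk, toWord_mk_of_chain' h]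

theorem R_of_cr {x y : A × Bool} (h : ¬(x.1 = y.1 ∧ x.2 = !y.2)) : R y x := by
  intro ⟨h1, h2⟩
  exact h ⟨h1.symm, by cases hx : x.2 <;> cases hy : y.2 <;> simp_all⟩

theorem pow_toWord {c : FreeGroup A} (hc : c ≠ 1) (hcr : CyclicallyReduced c) :
    ∀ n : ℕ, (c ^ (n + 1)).toWord = (c ^ n).toWord ++ c.toWord := by
  have hB : c.toWord ≠ [] := fun h => hc (toWord_eq_nil_iff.1 h)
  intro n
  induction n with
  | zero => simp
  | succ n ih =>
    have hlast : ((c ^ (n + 1)).toWord).getLast? = c.toWord.getLast? := by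
      rw [ih, List.getLast?_append_of_ne_nil _ hB]
    rw [pow_succ]
    apply toWord_mul_of_chain'
    apply List.isChain_append.2
    refine ⟨chain'_toWord _, chain'_toWord _, ?_⟩
    intro a ha b hb
    rw [hlast] at ha
    exact R_of_cr (hcr b a (by simpa using hb) (by simpa using ha))

theorem pow_getLast? {c : FreeGroup A} (hc : c ≠ 1) (hcr : CyclicallyReduced c) (n : ℕ) :
    ((c ^ (n + 1)).toWord).getLast? = c.toWord.getLast? := by
  have hB : c.toWord ≠ [] := fun h => hc (toWord_eq_nil_iff.1 h)
  rw [pow_toWord hc hcr, List.getLast?_append_of_ne_nil _ hB]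

theorem pow_head? {c : FreeGroup A} (hc : c ≠ 1) (hcr : CyclicallyReduced c) (n : ℕ) :
    ((c ^ (n + 1)).toWord).head? = c.toWord.head? := by
  induction n with
  | zero => simp
  | succ n ih =>
    have hne : (c ^ (n + 1)).toWord ≠ [] := by
      intro h
      rw [h] at ih
      have hB : c.toWord ≠ [] := fun h => hc (toWord_eq_nil_iff.1 h)
      rcases hcw : c.toWord with _ | ⟨a, L⟩
      · exact hB hcw
      · rw [hcw] at ih; simp at ih
    rw [pow_toWord hc hcr (n + 1), List.head?_append_of_ne_nil _ hne]
    exact ih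

theorem pow_norm {c : FreeGroup A} (hc : c ≠ 1) (hcr : CyclicallyReduced c) (n : ℕ) :
    FreeGroup.norm (c ^ (n + 1)) = (n + 1) * FreeGroup.norm c := by
  induction n with
  | zero => simp
  | succ n ih =>
    have h2 := congrArg List.length (pow_toWord hc hcr (n + 1))
    rw [List.length_append] at h2
    show (c ^ (n + 1 + 1)).toWord.length = _
    rw [h2]
    have : (c ^ (n + 1)).toWord.length = (n+1) * FreeGroup.norm c := ih
    rw [this]
    show (n + 1) * FreeGroup.norm c + FreeGroup.norm c = (n + 1 + 1) * FreeGroup.norm c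
    ring

theorem exists_decomp :
    ∀ n : ℕ, ∀ w : FreeGroup A, w.toWord.length ≤ n → w ≠ 1 →
    ∃ u c : FreeGroup A, w = u * c * u⁻¹ ∧ c ≠ 1 ∧ CyclicallyReduced c ∧
      w.toWord = u.toWord ++ c.toWord ++ u⁻¹.toWord := by
  intro n
  induction n with
  | zero =>
    intro w hw h1
    exact absurd (toWord_eq_nil_iff.1 (List.length_eq_zero_iff.1 (Nat.le_zero.1 hw))) h1
  | succ n IH =>
    intro w hw h1
    by_cases hcr : CyclicallyReduced w
    · refine ⟨1, w, by group, h1, hcr, ?_⟩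
      simp [FreeGroup.toWord_one]
    · unfold CyclicallyReduced at hcr
      push_neg at hcr
      obtain ⟨x, y, hx, hy, hxy1, hxy2⟩ := hcr
      have hLne : w.toWord ≠ [] := by
        intro h; rw [h] at hx; simp at hx
      -- w.toWord = x :: tail
      have hcons : x :: w.toWord.tail = w.toWord := List.cons_head?_tail hx
      set T := w.toWord.tail with hT
      have hTne : T ≠ [] := by
        intro h
        rw [h] at hcons
        rw [← hcons] at hy
        simp at hy
        rw [← hy] at hxy2
        simp at hxy2
      have hyT : T.getLast? = some y := by
        rw [← hcons] at hy
        rcases hT2 : T with _ | ⟨t, T'⟩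
        · exact absurd hT2 hTne
        · rw [hT2] at hy
          rwa [List.getLast?_cons_cons] at hy
      set M := T.dropLast with hM
      have hTM : M ++ [y] = T := List.dropLast_append_getLast? y hyT
      have hLfull : w.toWord = x :: (M ++ [y]) := by rw [hTM]; exact hcons.symm
      have hchain : Chain' R w.toWord := chain'_toWord w
      -- y is the inverse letter of x
      have hyx : y = (x.1, !x.2) := by
        have h2 : y.2 = !x.2 := by
          cases hb : x.2 <;> rw [hb] at hxy2 <;> simp [hxy2]
        exact Prod.ext hxy1.symm h2
      -- M is nonempty
      have hMne : M ≠ [] := by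
        intro h
        rw [h] at hLfull
        simp at hLfull
        rw [hLfull] at hchain
        exact (List.isChain_cons_cons.1 hchain).1 ⟨hxy1, hxy2⟩
      -- w = mk [x] * mk M * (mk [x])⁻¹
      have hinvx : (mk [x])⁻¹ = mk [y] := by
        rw [inv_mk]
        congr 1
        simp [invRev, hyx]
      have hwdec : w = mk [x] * mk M * (mk [x])⁻¹ := by
        rw [hinvx, mul_mk, mul_mk]
        conv_lhs => rw [← mk_toWord (x := w)]
        rw [hLfull]
        exact congrArg mk (by simp)
      set w' : FreeGroup A := mk M with hw'
      have hMchain : Chain' R M := hchain.infix ⟨[x], [y], by rw [hLfull]; simp⟩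
      have hw'toWord : w'.toWord = M := toWord_mk_of_chain' hMchain
      have hw'ne : w' ≠ 1 := by
        intro h
        rw [h] at hw'toWord
        exact hMne (hw'toWord.symm.trans (toWord_one))
      have hlen : M.length ≤ n := by
        have : w.toWord.length = M.length + 2 := by rw [hLfull]; simp
        omega
      obtain ⟨u', c, hdec, hc1, hccr, htw⟩ := IH w' (hw'toWord ▸ hlen) hw'ne
      rw [hw'toWord] at htw
      refine ⟨mk [x] * u', c, ?_, hc1, hccr, ?_⟩
      · rw [hwdec, hdec]; group
      · -- toWord computations
        have hA : (mk [x] * u').toWord = x :: u'.toWord := by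
          have : mk [x] * u' = mk (x :: u'.toWord) := by
            conv_lhs => rw [← mk_toWord (x := u')]
            rw [mul_mk]
            rfl
          rw [this]
          apply toWord_mk_of_chain'
          have : (x :: u'.toWord) <+: w.toWord := by
            refine ⟨c.toWord ++ u'⁻¹.toWord ++ [y], ?_⟩
            rw [hLfull, htw]
            simp
          exact hchain.prefix this
        have hC : ((mk [x] * u')⁻¹).toWord = u'⁻¹.toWord ++ [y] := by
          have : (mk [x] * u')⁻¹ = mk (u'⁻¹.toWord ++ [y]) := by
            rw [mul_inv_rev, hinvx]
            conv_lhs => rw [← mk_toWord (x := u'⁻¹)]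
            rw [mul_mk]
          rw [this]
          apply toWord_mk_of_chain'
          have : (u'⁻¹.toWord ++ [y]) <:+ w.toWord := by
            refine ⟨x :: (u'.toWord ++ c.toWord), ?_⟩
            rw [hLfull, htw]
            simp
          exact hchain.suffix this
        rw [hA, hC, hLfull, htw]
        simp

theorem toWord_conj_pow {u c : FreeGroup A} (hc : c ≠ 1) (hccr : CyclicallyReduced c)
    (hch : Chain' R (u.toWord ++ c.toWord ++ u⁻¹.toWord)) (m : ℕ) :
    (u * c ^ (m + 1) * u⁻¹).toWord = u.toWord ++ (c ^ (m + 1)).toWord ++ u⁻¹.toWord := by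
  have hB : c.toWord ≠ [] := fun h => hc (toWord_eq_nil_iff.1 h)
  have hBn : (c ^ (m + 1)).toWord ≠ [] := by
    intro h
    have := pow_head? hc hccr m
    rw [h] at this
    rcases hcw : c.toWord with _ | ⟨a, L⟩
    · exact hB hcw
    · rw [hcw] at this; simp at this
  rw [List.append_assoc] at hch
  obtain ⟨hchU, hchBV, hjU⟩ := List.isChain_append.1 hch
  obtain ⟨hchB, hchV, hjB⟩ := List.isChain_append.1 hchBV
  -- first, (c ^ (m+1) * u⁻¹).toWord
  have h1 : (c ^ (m + 1) * u⁻¹).toWord = (c ^ (m + 1)).toWord ++ u⁻¹.toWord := by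
    apply toWord_mul_of_chain'
    apply List.isChain_append.2
    refine ⟨chain'_toWord _, chain'_toWord _, ?_⟩
    intro a ha b hb
    rw [pow_getLast? hc hccr m] at ha
    exact hjB a ha b hb
  have h2 : (u * (c ^ (m + 1) * u⁻¹)).toWord
      = u.toWord ++ ((c ^ (m + 1)).toWord ++ u⁻¹.toWord) := by
    rw [← h1]
    apply toWord_mul_of_chain'
    rw [h1]; apply List.isChain_append.2
    refine ⟨chain'_toWord _, h1 ▸ chain'_toWord (c ^ (m + 1) * u⁻¹), ?_⟩
    intro a ha b hb
    rw [List.head?_append_of_ne_nil _ hBn, pow_head? hc hccr m] at hb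
    apply hjU a ha b
    rw [List.head?_append_of_ne_nil _ hB]
    exact hb
  rw [← mul_assoc] at h2
  rw [h2, List.append_assoc]

theorem norm_lt_norm_pow {w : FreeGroup A} (hw : w ≠ 1) {n : ℕ} (hn : 2 ≤ n) :
    FreeGroup.norm w < FreeGroup.norm (w ^ n) := by
  obtain ⟨u, c, hdec, hc1, hccr, htw⟩ := exists_decomp w.toWord.length w le_rfl hw
  have hch : Chain' R (u.toWord ++ c.toWord ++ u⁻¹.toWord) := htw ▸ chain'_toWord w
  obtain ⟨m, rfl⟩ : ∃ m, n = m + 1 + 1 := ⟨n - 2, by omega⟩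
  have hpow : w ^ (m + 1 + 1) = u * c ^ (m + 1 + 1) * u⁻¹ := by
    rw [hdec, conj_pow]
  have h1 := toWord_conj_pow hc1 hccr hch (m + 1)
  have hnorm1 : FreeGroup.norm (w ^ (m + 1 + 1))
      = u.toWord.length + (c ^ (m + 1 + 1)).toWord.length + u⁻¹.toWord.length := by
    show (w ^ (m + 1 + 1)).toWord.length = _
    rw [hpow, h1]
    simp
    omega
  have hnorm0 : FreeGroup.norm w = u.toWord.length + c.toWord.length + u⁻¹.toWord.length := by
    show w.toWord.length = _
    rw [htw]; simp; omega
  have hcn : (c ^ (m + 1 + 1)).toWord.length = (m + 2) * c.toWord.length := by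
    have := pow_norm hc1 hccr (m + 1)
    simpa [FreeGroup.norm] using this
  have hcpos : 0 < c.toWord.length := by
    rcases Nat.eq_zero_or_pos c.toWord.length with h | h
    · exact absurd (toWord_eq_nil_iff.1 (List.length_eq_zero_iff.1 h)) hc1
    · exact h
  rw [hnorm0, hnorm1, hcn]
  have : c.toWord.length < (m + 2) * c.toWord.length := by nlinarith
  omega

theorem norm_lt_norm_zpow {w : FreeGroup A} (hw : w ≠ 1) {l : ℤ} (hl : 2 ≤ |l|) :
    FreeGroup.norm w < FreeGroup.norm (w ^ l) := by
  rcases le_or_gt 0 l with h | h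
  · have h2 : w ^ l = w ^ l.toNat := by
      rw [← zpow_natCast, Int.toNat_of_nonneg h]
    rw [h2]
    apply norm_lt_norm_pow hw
    rw [abs_of_nonneg h] at hl
    omega
  · have h2 : FreeGroup.norm (w ^ l) = FreeGroup.norm (w ^ (-l).toNat) := by
      rw [← norm_inv_eq, ← zpow_neg, ← zpow_natCast, Int.toNat_of_nonneg (by omega)]
    rw [h2]
    apply norm_lt_norm_pow hw
    rw [abs_of_neg h] at hl
    omega

theorem exists_primitive_root {g : FreeGroup A} (hg : g ≠ 1) :
    ∃ p : FreeGroup A, IsPrimitiveElt p ∧ ∃ k : ℤ, p ^ k = g := by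
  classical
  let P : ℕ → Prop := fun n => ∃ w : FreeGroup A, (∃ l : ℤ, w ^ l = g) ∧ FreeGroup.norm w = n
  have hP : ∃ n, P n := ⟨FreeGroup.norm g, g, ⟨1, zpow_one g⟩, rfl⟩
  obtain ⟨p, ⟨l, hpl⟩, hpn⟩ := Nat.find_spec hP
  have hmin : ∀ v : FreeGroup A, (∃ t : ℤ, v ^ t = g) → FreeGroup.norm p ≤ FreeGroup.norm v := by
    intro v hv
    rw [hpn]
    exact Nat.find_min' hP ⟨v, hv, rfl⟩
  have hp1 : p ≠ 1 := by
    rintro rfl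
    rw [one_zpow] at hpl
    exact hg hpl.symm
  refine ⟨p, ⟨hp1, ?_⟩, l, hpl⟩
  intro v t hvt
  have hv1 : v ≠ 1 := by
    rintro rfl
    rw [one_zpow] at hvt
    exact hp1 hvt.symm
  rcases eq_or_ne t 1 with rfl | ht1
  · left; rw [← hvt]; exact (zpow_one v).symm
  rcases eq_or_ne t (-1) with rfl | htm1
  · right; rw [← hvt]; simp
  rcases eq_or_ne t 0 with rfl | ht0
  · exfalso; rw [zpow_zero] at hvt; exact hp1 hvt.symm
  exfalso
  have habs : 2 ≤ |t| := by
    rcases le_or_gt 0 t with h | h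
    · rw [abs_of_nonneg h]; omega
    · rw [abs_of_neg h]; omega
  have h2 : FreeGroup.norm v < FreeGroup.norm p := by
    rw [← hvt]
    exact norm_lt_norm_zpow hv1 habs
  have h3 : v ^ (t * l) = g := by rw [zpow_mul, hvt, hpl]
  exact absurd (hmin v ⟨t * l, h3⟩) (by omega)

theorem of_eq_of_comm {i j : A}
    (h : FreeGroup.of i * FreeGroup.of j = FreeGroup.of j * FreeGroup.of i) : i = j := by
  have hchain : ∀ a b : A, Chain' R [(a, true), (b, true)] := by
    intro a b
    refine List.isChain_cons_cons.2 ⟨?_, List.isChain_singleton _⟩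
    rintro ⟨h1, h2⟩
    simp at h2
  have key : ∀ a b : A, (FreeGroup.of a * FreeGroup.of b).toWord = [(a, true), (b, true)] := by
    intro a b
    have : FreeGroup.of a * FreeGroup.of b = mk [(a, true), (b, true)] := by
      rw [show (FreeGroup.of a : FreeGroup A) = mk [(a, true)] from rfl,
        show (FreeGroup.of b : FreeGroup A) = mk [(b, true)] from rfl, mul_mk]
      rfl
    rw [this, toWord_mk_of_chain' (hchain a b)]
  have h2 := (key i j).symm.trans ((congrArg toWord h).trans (key j i))
  obtain ⟨h3, -⟩ := List.cons_eq_cons.mp h2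
  exact congrArg Prod.fst h3

theorem exists_common_of_subsingleton {ι : Type*} (hsi : ∀ i j : ι, i = j)
    (x y : FreeGroup ι) :
    ∃ z : FreeGroup ι, ∃ m n : ℤ, x = z ^ m ∧ y = z ^ n := by
  rcases isEmpty_or_nonempty ι with hE | ⟨⟨i₀⟩⟩
  · have h1 : ∀ u : FreeGroup ι, u = 1 := by
      intro u
      have hu : u ∈ Subgroup.closure (Set.range (FreeGroup.of : ι → FreeGroup ι)) := by
        rw [FreeGroup.closure_range_of]; trivial
      rwa [Set.range_eq_empty, Subgroup.closure_empty, Subgroup.mem_bot] at hu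
    exact ⟨1, 0, 0, by rw [h1 x, zpow_zero], by rw [h1 y, zpow_zero]⟩
  · have hr : Set.range (FreeGroup.of : ι → FreeGroup ι) = {FreeGroup.of i₀} := by
      apply Set.eq_singleton_iff_unique_mem.2
      refine ⟨⟨i₀, rfl⟩, ?_⟩
      rintro u ⟨i, rfl⟩
      rw [hsi i i₀]
    have htop : Subgroup.zpowers (FreeGroup.of i₀) = ⊤ := by
      rw [Subgroup.zpowers_eq_closure, ← hr]
      exact FreeGroup.closure_range_of ι
    obtain ⟨m, hm⟩ := Subgroup.mem_zpowers_iff.1 (htop ▸ Subgroup.mem_top x)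
    obtain ⟨n, hn⟩ := Subgroup.mem_zpowers_iff.1 (htop ▸ Subgroup.mem_top y)
    exact ⟨FreeGroup.of i₀, m, n, hm.symm, hn.symm⟩

theorem commute_exists {a b : FreeGroup A} (h : a * b = b * a) :
    ∃ c : FreeGroup A, ∃ m n : ℤ, a = c ^ m ∧ b = c ^ n := by
  classical
  set H := Subgroup.closure ({a, b} : Set (FreeGroup A)) with hH
  have ha : a ∈ H := Subgroup.subset_closure (by simp)
  have hb : b ∈ H := Subgroup.subset_closure (by simp)
  have hcomm : ∀ u ∈ H, ∀ v ∈ H, Commute u v := by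
    intro u hu v hv
    refine Subgroup.closure_induction₂ (p := fun x y _ _ => Commute x y)
      ?_ ?_ ?_ ?_ ?_ ?_ ?_ hu hv
    · intro x y hx hy
      simp only [Set.mem_insert_iff, Set.mem_singleton_iff] at hx hy
      rcases hx with rfl | rfl <;> rcases hy with rfl | rfl
      · exact Commute.refl _
      · exact h
      · exact h.symm
      · exact Commute.refl _
    · intro x _; exact Commute.one_left x
    · intro x _; exact Commute.one_right x
    · intro x y z _ _ _ h1 h2; exact h1.mul_left h2
    · intro y z x _ _ _ h1 h2; exact h1.mul_right h2
    · intro x y _ _ h1; exact h1.inv_left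
    · intro x y _ _ h1; exact h1.inv_right
  have key : ∀ u v : H, u * v = v * u := by
    intro u v
    apply Subtype.ext
    exact hcomm u u.2 v v.2
  let e := IsFreeGroup.toFreeGroup H
  have hsi : ∀ i j : IsFreeGroup.Generators H, i = j := by
    intro i j
    apply of_eq_of_comm (A := IsFreeGroup.Generators H)
    apply e.symm.injective
    rw [_root_.map_mul e.symm, _root_.map_mul e.symm, key]
  obtain ⟨z, m, n, hm, hn⟩ := exists_common_of_subsingleton hsi (e ⟨a, ha⟩) (e ⟨b, hb⟩)
  refine ⟨((e.symm z : H) : FreeGroup A), m, n, ?_, ?_⟩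
  · have h1 : (⟨a, ha⟩ : H) = e.symm z ^ m := by
      apply e.injective
      rw [map_zpow, MulEquiv.apply_symm_apply, hm]
    calc a = ((⟨a, ha⟩ : H) : FreeGroup A) := rfl
      _ = ((e.symm z ^ m : H) : FreeGroup A) := by rw [h1]
      _ = ((e.symm z : H) : FreeGroup A) ^ m := by
          rw [SubgroupClass.coe_zpow]
  · have h1 : (⟨b, hb⟩ : H) = e.symm z ^ n := by
      apply e.injective
      rw [map_zpow, MulEquiv.apply_symm_apply, hn]
    calc b = ((⟨b, hb⟩ : H) : FreeGroup A) := rfl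
      _ = ((e.symm z ^ n : H) : FreeGroup A) := by rw [h1]
      _ = ((e.symm z : H) : FreeGroup A) ^ n := by
          rw [SubgroupClass.coe_zpow]

theorem isPrimitive_conj {p : FreeGroup A} (g : FreeGroup A) (hp : IsPrimitiveElt p) :
    IsPrimitiveElt (g⁻¹ * p * g) := by
  obtain ⟨hp1, hp2⟩ := hp
  constructor
  · intro h
    apply hp1
    have h0 : p = g * (g⁻¹ * p * g) * g⁻¹ := by group
    rw [h0, h]; group
  · intro w l hw
    have hconj : (g * w * g⁻¹) ^ l = p := by
      rw [conj_zpow, hw]; group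
    have h0 : w = g⁻¹ * (g * w * g⁻¹) * g := by group
    rcases hp2 _ _ hconj with h | h
    · left; rw [h0, h]
    · right; rw [h0, h]; group

end FGAux

theorem stmt2 {A : Type*} (x₁ x₂ y₁ y₂ : FreeGroup A) (hx : x₁ ≠ x₂) (hy : y₁ ≠ y₂)
    (α β γ α' β' x₁' x₂' y₁' y₂' : FreeGroup A)
    (h11 : x₁ * α * y₁ * β = γ * y₁' * α' * x₁' * β')
    (h12 : x₁ * α * y₂ * β = γ * y₂' * α' * x₁' * β')
    (h21 : x₂ * α * y₁ * β = γ * y₁' * α' * x₂' * β')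
    (h22 : x₂ * α * y₂ * β = γ * y₂' * α' * x₂' * β') :
    ∃ p : FreeGroup A, IsPrimitiveElt p ∧
      ∃ r s : ℤ, x₁ * α = x₂ * α * p ^ r ∧ y₁ = p ^ s * y₂ := by
  classical
  set u : FreeGroup A := α * (y₁ * y₂⁻¹) * α⁻¹ with hu
  have c1 : x₁ * u * x₁⁻¹ = γ * (y₁' * y₂'⁻¹) * γ⁻¹ := by
    have h0 : x₁ * u * x₁⁻¹ = (x₁ * α * y₁ * β) * (x₁ * α * y₂ * β)⁻¹ := by rw [hu]; group
    rw [h0, h11, h12]; group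
  have c2 : x₂ * u * x₂⁻¹ = γ * (y₁' * y₂'⁻¹) * γ⁻¹ := by
    have h0 : x₂ * u * x₂⁻¹ = (x₂ * α * y₁ * β) * (x₂ * α * y₂ * β)⁻¹ := by rw [hu]; group
    rw [h0, h21, h22]; group
  have hcomm : (x₂⁻¹ * x₁) * u = u * (x₂⁻¹ * x₁) := by
    have h := c1.trans c2.symm
    calc (x₂⁻¹ * x₁) * u = x₂⁻¹ * (x₁ * u * x₁⁻¹) * x₁ := by group
      _ = x₂⁻¹ * (x₂ * u * x₂⁻¹) * x₁ := by rw [h]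
      _ = u * (x₂⁻¹ * x₁) := by group
  obtain ⟨c, m, n, hbm, hun⟩ := FGAux.commute_exists hcomm
  have hb1 : x₂⁻¹ * x₁ ≠ 1 := fun h => hx (inv_mul_eq_one.1 h).symm
  have hc1 : c ≠ 1 := by
    rintro rfl
    rw [one_zpow] at hbm
    exact hb1 hbm
  obtain ⟨p, hprim, k, hpk⟩ := FGAux.exists_primitive_root hc1
  have hpkm : p ^ (k * m) = x₂⁻¹ * x₁ := by rw [zpow_mul, hpk, ← hbm]
  have hpkn : p ^ (k * n) = u := by rw [zpow_mul, hpk, ← hun]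
  have hconjpow : ∀ l : ℤ, (α⁻¹ * p * α) ^ l = α⁻¹ * p ^ l * α := by
    intro l
    have h2 : α⁻¹ * p * α = α⁻¹ * p * (α⁻¹)⁻¹ := by rw [inv_inv]
    rw [h2, conj_zpow, inv_inv]
  refine ⟨α⁻¹ * p * α, FGAux.isPrimitive_conj α hprim, k * m, k * n, ?_, ?_⟩
  · rw [hconjpow, hpkm]; group
  · rw [hconjpow, hpkn, hu]; group
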